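/- Let N ≥ 2 and M = N(N−1)/2, and let μ⁽¹⁾ ∈ ℝ^N be a vector with pairwise distinct entries. Then there exist vectors μ⁽²⁾, …, μ⁽ᴹ⁾ ∈ ℝ^N such that the M×M real matrix G, whose rows are indexed by i ∈ {1,…,M} and whose columns are indexed by pairs (j,k) with 1 ≤ j < k ≤ N, with entries G_{i,(j,k)} = (μ⁽ⁱ⁾_j − μ⁽ⁱ⁾_k)², is invertible. -/

import Mathlib

open Matrix

variable {N : ℕ}

private def pairSq (w : Fin N → ℝ) : {jk : Fin N × Fin N // jk.1 < jk.2} → ℝ :=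
  fun p => (w p.1.1 - w p.1.2) ^ 2

private theorem card_pairs (N : ℕ) :
    Fintype.card {jk : Fin N × Fin N // jk.1 < jk.2} = N * (N - 1) / 2 := by
  have e : {jk : Fin N × Fin N // jk.1 < jk.2} ≃ Σ k : Fin N, Fin k.val :=
    { toFun := fun p => ⟨p.1.2, ⟨p.1.1, p.2⟩⟩
      invFun := fun s => ⟨(⟨s.2.val, s.2.isLt.trans s.1.isLt⟩, s.1), s.2.isLt⟩
      left_inv := fun p => by ext <;> rfl
      right_inv := fun s => by ext <;> rfl }
  rw [Fintype.card_congr e, Fintype.card_sigma]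
  simp only [Fintype.card_fin]
  rw [Fin.sum_univ_eq_sum_range (fun i => i) N, Finset.sum_range_id]

private theorem span_pairSq (N : ℕ) :
    Submodule.span ℝ (Set.range (pairSq (N := N))) = ⊤ := by
  classical
  rw [eq_top_iff, ← (Pi.basisFun ℝ {jk : Fin N × Fin N // jk.1 < jk.2}).span_eq,
    Submodule.span_le]
  rintro - ⟨p, rfl⟩
  simp only [Pi.basisFun_apply]
  obtain ⟨⟨a, b⟩, hab⟩ := p
  set f1 : Fin N → ℝ := Pi.single a 1 with hf1
  set f2 : Fin N → ℝ := Pi.single b 1 with hf2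
  have hmem : (-(4:ℝ)⁻¹) • ((pairSq (f1 + (2:ℝ) • f2) - pairSq f1) - (4:ℝ) • pairSq f2)
      ∈ Submodule.span ℝ (Set.range (pairSq (N := N))) := by
    refine Submodule.smul_mem _ _ (Submodule.sub_mem _ (Submodule.sub_mem _ ?_ ?_)
      (Submodule.smul_mem _ _ ?_)) <;> exact Submodule.subset_span ⟨_, rfl⟩
  rw [SetLike.mem_coe]
  convert hmem using 1
  funext ⟨⟨j, k⟩, hjk⟩
  simp only [Pi.smul_apply, Pi.sub_apply, Pi.add_apply, smul_eq_mul, pairSq,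
    hf1, hf2, Pi.single_apply, Pi.single_apply]
  by_cases h1 : j = a <;> by_cases h2 : j = b <;> by_cases h3 : k = a <;> by_cases h4 : k = b
  all_goals (first
    | (exfalso; subst_vars;
       first
         | exact lt_irrefl _ hjk
         | exact lt_irrefl _ (hjk.trans hab)
         | exact lt_irrefl _ (hab.trans hjk))
    | (simp only [h1, h2, h3, h4, Subtype.mk.injEq, Prod.mk.injEq]; norm_num [hab.ne, hab.ne']))

/-- Given a vector `μ₁ ∈ ℝ^N` with pairwise distinct entries, the family of commuting
operators can be completed so that the `M × M` coefficient matrix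
`G_{i,(j,k)} = (μ⁽ⁱ⁾_j − μ⁽ⁱ⁾_k)²` (rows indexed by `i ∈ {1,…,M}`, columns by pairs
`j < k`, where `M = N(N−1)/2`) is invertible. -/
theorem exists_invertible_coefficient_matrix
    (N M : ℕ) (hN : 2 ≤ N) (hM : M = N * (N - 1) / 2)
    (μ₁ : Fin N → ℝ) (hμ₁ : Function.Injective μ₁) :
    ∃ μ : Fin M → Fin N → ℝ,
      (∀ h : 0 < M, μ ⟨0, h⟩ = μ₁) ∧
      Function.Bijective (fun x : {jk : Fin N × Fin N // jk.1 < jk.2} → ℝ =>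
        (Matrix.of fun (i : Fin M) (jk : {jk : Fin N × Fin N // jk.1 < jk.2}) =>
          (μ i jk.1.1 - μ i jk.1.2) ^ 2).mulVec x) := by
  classical
  have hM0 : 0 < M := by
    subst hM
    have h1 : 2 * 1 ≤ N * (N - 1) := Nat.mul_le_mul hN (by omega)
    omega
  have hcard : Fintype.card {jk : Fin N × Fin N // jk.1 < jk.2} = M := by
    rw [card_pairs, hM]
  have hvne : pairSq μ₁ ≠ 0 := by
    intro h
    have h01 : ((⟨0, by omega⟩ : Fin N), (⟨1, by omega⟩ : Fin N)).1
        < ((⟨0, by omega⟩ : Fin N), (⟨1, by omega⟩ : Fin N)).2 := by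
      simp [Fin.lt_def]
    have h2 := congrFun h ⟨(⟨0, by omega⟩, ⟨1, by omega⟩), h01⟩
    simp only [pairSq, Pi.zero_apply, pow_eq_zero_iff, sub_eq_zero, two_ne_zero,
      ne_eq, OfNat.ofNat_ne_zero, not_false_eq_true] at h2
    exact absurd (hμ₁ h2) (by simp)
  have hli : LinearIndependent ℝ
      ((↑) : ({pairSq μ₁} : Set ({jk : Fin N × Fin N // jk.1 < jk.2} → ℝ)) →
        ({jk : Fin N × Fin N // jk.1 < jk.2} → ℝ)) :=
    linearIndepOn_singleton_iff (R := ℝ) (v := id) |>.mpr hvne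
  have hsub : ({pairSq μ₁} : Set ({jk : Fin N × Fin N // jk.1 < jk.2} → ℝ))
      ⊆ Set.range (pairSq (N := N)) :=
    Set.singleton_subset_iff.mpr ⟨μ₁, rfl⟩
  set bset := LinearIndepOn.extend (v := id) hli hsub with hbset
  have hbsub : bset ⊆ Set.range pairSq := LinearIndepOn.extend_subset (v := id) hli hsub
  have hmemb : pairSq μ₁ ∈ bset := LinearIndepOn.subset_extend (v := id) hli hsub rfl
  have hbli : LinearIndependent ℝ ((↑) : bset → ({jk : Fin N × Fin N // jk.1 < jk.2} → ℝ)) :=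
    LinearIndepOn.linearIndepOn_extend (v := id) hli hsub
  have hbspan : Submodule.span ℝ bset = ⊤ := by
    rw [eq_top_iff, ← span_pairSq N]
    exact Submodule.span_le.mpr (LinearIndepOn.subset_span_extend hli hsub)
  let bas : Module.Basis bset ℝ ({jk : Fin N × Fin N // jk.1 < jk.2} → ℝ) :=
    Module.Basis.mk hbli (by rw [Subtype.range_coe, hbspan])
  haveI : Fintype bset := FiniteDimensional.fintypeBasisIndex bas
  have hcardb : Fintype.card bset = M := by
    rw [← Module.finrank_eq_card_basis bas, Module.finrank_fintype_fun_eq_card, hcard]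
  let e2 : bset ≃ Fin M := Fintype.equivFinOfCardEq hcardb
  let x₀ : bset := ⟨pairSq μ₁, hmemb⟩
  let f : Fin M → bset := fun i => e2.symm (Equiv.swap (⟨0, hM0⟩ : Fin M) (e2 x₀) i)
  have hf0 : f ⟨0, hM0⟩ = x₀ := by simp [f, Equiv.swap_apply_left]
  have hfsurj : Function.Surjective f := fun y => ⟨Equiv.swap (⟨0, hM0⟩ : Fin M) (e2 x₀) (e2 y),
    by simp [f]⟩
  let μ : Fin M → Fin N → ℝ := fun i =>
    if h : (i : ℕ) = 0 then μ₁ else Classical.choose (hbsub (f i).2)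
  have hμv : ∀ i, pairSq (μ i) = (f i : {jk : Fin N × Fin N // jk.1 < jk.2} → ℝ) := by
    intro i
    by_cases h : (i : ℕ) = 0
    · have hi : i = ⟨0, hM0⟩ := Fin.ext h
      subst hi
      simp only [μ, dif_pos, hf0]
      rfl
    · simp only [μ, h, dif_neg, not_false_eq_true]
      exact Classical.choose_spec (hbsub (f i).2)
  refine ⟨μ, fun h => by simp [μ], ?_⟩
  set G : Matrix (Fin M) {jk : Fin N × Fin N // jk.1 < jk.2} ℝ :=
    Matrix.of fun (i : Fin M) (jk : {jk : Fin N × Fin N // jk.1 < jk.2}) =>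
      (μ i jk.1.1 - μ i jk.1.2) ^ 2 with hG
  have hGrow : ∀ i, (fun p => G i p) = pairSq (μ i) := fun i => rfl
  have h0 : ∀ x, G.mulVecLin x = 0 → x = 0 := by
    intro x hx
    have hdot : ∀ y ∈ Submodule.span ℝ bset, dotProduct y x = 0 := by
      intro y hy
      induction hy using Submodule.span_induction with
      | mem y hy =>
        obtain ⟨i, hi⟩ := hfsurj ⟨y, hy⟩
        have hyi : pairSq (μ i) = y := by rw [hμv i, hi]
        have : dotProduct y x = G.mulVec x i := by
          rw [← hyi]; rfl
        rw [this]
        have := congrFun hx i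
        simpa [Matrix.mulVecLin_apply] using this
      | zero => simp
      | add y z _ _ ihy ihz => simp [add_dotProduct, ihy, ihz]
      | smul c y _ ihy => simp [smul_dotProduct, ihy]
    have hxx := hdot x (by rw [hbspan]; trivial)
    exact dotProduct_self_eq_zero.mp hxx
  have hinj : Function.Injective G.mulVecLin :=
    LinearMap.ker_eq_bot.mp (LinearMap.ker_eq_bot'.mpr h0)
  have hrank : Module.finrank ℝ ({jk : Fin N × Fin N // jk.1 < jk.2} → ℝ)
      = Module.finrank ℝ (Fin M → ℝ) := by
    rw [Module.finrank_fintype_fun_eq_card, Module.finrank_fintype_fun_eq_card,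
      hcard, Fintype.card_fin]
  have hsurj : Function.Surjective G.mulVecLin :=
    (LinearMap.injective_iff_surjective_of_finrank_eq_finrank hrank).mp hinj
  exact ⟨hinj, hsurj⟩
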